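/- arXiv:2604.09495 — 2 statements merged into one kernel-verified Lean document; each statement's English description precedes it below -/
import Mathlib

section
/- Conservative update improvement (Corollary 1): Fix a risk parameter λ > 0, a joint agent-state based policy π, a time t ∈ {1,…,T}, an agent i ∈ {1,2}, and α ∈ [0,1]. Let π̄^i_t be any greedy update for agent i at time t, and define the conservative stage-t rule π^{i,α}_t(a^i,z^i|y^i,z^i₋) = (1−α)·π^i_t(a^i,z^i|y^i,z^i₋) + α·𝟙[(a^i,z^i) = π̄^i_t(y^i,z^i₋)]. Let π' denote the joint policy obtained from π by replacing π^i_t with π^{i,α}_t. Then J^λ_{t:T}(π') ≥ J^λ_{t:T}(π). -/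
open Finset
open scoped Classical

/-- A two-agent finite-horizon Dec-POMDP. -/
structure DecPOMDP (S Y1 Y2 A1 A2 Z1 Z2 : Type)
    [Fintype S] [Fintype Y1] [Fintype Y2] [Fintype A1] [Fintype A2]
    [Fintype Z1] [Fintype Z2] where
  P : S → A1 × A2 → S × Y1 × Y2 → ℝ
  P_nonneg : ∀ s a x, 0 ≤ P s a x
  P_sum : ∀ s a, ∑ x, P s a x = 1
  r : S → A1 × A2 → ℝ
  init : S × Y1 × Y2 → ℝ
  init_nonneg : ∀ x, 0 ≤ init x
  init_sum : ∑ x, init x = 1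
  phi1 : Z1 → ℝ
  phi1_nonneg : ∀ z, 0 ≤ phi1 z
  phi1_sum : ∑ z, phi1 z = 1
  phi2 : Z2 → ℝ
  phi2_nonneg : ∀ z, 0 ≤ phi2 z
  phi2_sum : ∑ z, phi2 z = 1
  T : ℕ
  T_pos : 1 ≤ T

variable {S Y1 Y2 A1 A2 Z1 Z2 : Type}
  [Fintype S] [Fintype Y1] [Fintype Y2] [Fintype A1] [Fintype A2]
  [Fintype Z1] [Fintype Z2]
  [Nonempty S] [Nonempty Y1] [Nonempty Y2] [Nonempty A1] [Nonempty A2]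
  [Nonempty Z1] [Nonempty Z2]

/-- A stage decision rule is a pmf on actions and next agent states for each
observation/agent-state pair. -/
def IsRule {Y Z A : Type} [Fintype A] [Fintype Z] (ρ : Y → Z → A × Z → ℝ) : Prop :=
  (∀ y z x, 0 ≤ ρ y z x) ∧ ∀ y z, ∑ x, ρ y z x = 1

/-- An agent-state based policy: a stage rule for every (0-indexed) time. -/
def IsPolicy {Y Z A : Type} [Fintype A] [Fintype Z] (π : ℕ → Y → Z → A × Z → ℝ) : Prop :=
  ∀ t, IsRule (π t)

/-- The marginal distribution ζ^π_t on (s_t, y_t, z_{t-1}) (time is 0-indexed). -/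
noncomputable def zetaM (M : DecPOMDP S Y1 Y2 A1 A2 Z1 Z2)
    (π1 : ℕ → Y1 → Z1 → A1 × Z1 → ℝ) (π2 : ℕ → Y2 → Z2 → A2 × Z2 → ℝ) :
    ℕ → S → Y1 × Y2 → Z1 × Z2 → ℝ
  | 0 => fun s y zm => M.init (s, y.1, y.2) * M.phi1 zm.1 * M.phi2 zm.2
  | (t+1) => fun s y zm =>
      ∑ s' : S, ∑ y' : Y1 × Y2, ∑ a' : A1 × A2, ∑ zm' : Z1 × Z2,
        zetaM M π1 π2 t s' y' zm' *
        (π1 t y'.1 zm'.1 (a'.1, zm.1) * π2 t y'.2 zm'.2 (a'.2, zm.2)) *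
        M.P s' a' (s, y.1, y.2)

/-- Auxiliary risk-seeking centralized Q-function, indexed by the number `m` of
remaining steps, so that the Q-function at (0-indexed) time `t` is `Qaux (T-1-t)`. -/
noncomputable def Qaux (M : DecPOMDP S Y1 Y2 A1 A2 Z1 Z2)
    (π1 : ℕ → Y1 → Z1 → A1 × Z1 → ℝ) (π2 : ℕ → Y2 → Z2 → A2 × Z2 → ℝ) (lam : ℝ) :
    ℕ → S → Y1 × Y2 → Z1 × Z2 → A1 × A2 → Z1 × Z2 → ℝ
  | 0 => fun s _ _ a _ => M.r s a
  | (m+1) => fun s _ _ a z => M.r s a + (1/lam) * Real.log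
      (∑ sp : S, ∑ yp : Y1 × Y2, ∑ ap : A1 × A2, ∑ zp : Z1 × Z2,
        M.P s a (sp, yp.1, yp.2) *
        (π1 (M.T - 1 - m) yp.1 z.1 (ap.1, zp.1) * π2 (M.T - 1 - m) yp.2 z.2 (ap.2, zp.2)) *
        Real.exp (lam * Qaux M π1 π2 lam m sp yp z ap zp))

/-- The risk-seeking centralized Q-function at (0-indexed) time `t`. -/
noncomputable def Qfun (M : DecPOMDP S Y1 Y2 A1 A2 Z1 Z2)
    (π1 : ℕ → Y1 → Z1 → A1 × Z1 → ℝ) (π2 : ℕ → Y2 → Z2 → A2 × Z2 → ℝ) (lam : ℝ) (t : ℕ) :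
    S → Y1 × Y2 → Z1 × Z2 → A1 × A2 → Z1 × Z2 → ℝ :=
  Qaux M π1 π2 lam (M.T - 1 - t)

/-- Risk-seeking performance J^λ_{t:T}(π) (time is 0-indexed). -/
noncomputable def Jrisk (M : DecPOMDP S Y1 Y2 A1 A2 Z1 Z2)
    (π1 : ℕ → Y1 → Z1 → A1 × Z1 → ℝ) (π2 : ℕ → Y2 → Z2 → A2 × Z2 → ℝ)
    (lam : ℝ) (t : ℕ) : ℝ :=
  (1/lam) * Real.log
    (∑ s : S, ∑ y : Y1 × Y2, ∑ zm : Z1 × Z2, ∑ a : A1 × A2, ∑ z : Z1 × Z2,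
      zetaM M π1 π2 t s y zm *
      (π1 t y.1 zm.1 (a.1, z.1) * π2 t y.2 zm.2 (a.2, z.2)) *
      Real.exp (lam * Qfun M π1 π2 lam t s y zm a z))

/-- Marginal of ζ^π_t on agent 1's (observation, previous agent state). -/
noncomputable def marg1 (M : DecPOMDP S Y1 Y2 A1 A2 Z1 Z2)
    (π1 : ℕ → Y1 → Z1 → A1 × Z1 → ℝ) (π2 : ℕ → Y2 → Z2 → A2 × Z2 → ℝ)
    (t : ℕ) (y1 : Y1) (z1m : Z1) : ℝ :=
  ∑ s : S, ∑ y2 : Y2, ∑ z2m : Z2, zetaM M π1 π2 t s (y1, y2) (z1m, z2m)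

/-- Marginal of ζ^π_t on agent 2's (observation, previous agent state). -/
noncomputable def marg2 (M : DecPOMDP S Y1 Y2 A1 A2 Z1 Z2)
    (π1 : ℕ → Y1 → Z1 → A1 × Z1 → ℝ) (π2 : ℕ → Y2 → Z2 → A2 × Z2 → ℝ)
    (t : ℕ) (y2 : Y2) (z2m : Z2) : ℝ :=
  ∑ s : S, ∑ y1 : Y1, ∑ z1m : Z1, zetaM M π1 π2 t s (y1, y2) (z1m, z2m)

/-- Averaged local Q-function for agent 1 at time t. -/
noncomputable def Qbar1 (M : DecPOMDP S Y1 Y2 A1 A2 Z1 Z2)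
    (π1 : ℕ → Y1 → Z1 → A1 × Z1 → ℝ) (π2 : ℕ → Y2 → Z2 → A2 × Z2 → ℝ)
    (lam : ℝ) (t : ℕ) (y1 : Y1) (z1m : Z1) (a1 : A1) (z1 : Z1) : ℝ :=
  (1/lam) * Real.log
    (∑ s : S, ∑ y2 : Y2, ∑ z2m : Z2, ∑ a2 : A2, ∑ z2 : Z2,
      (zetaM M π1 π2 t s (y1, y2) (z1m, z2m) / marg1 M π1 π2 t y1 z1m) *
      π2 t y2 z2m (a2, z2) *
      Real.exp (lam * Qfun M π1 π2 lam t s (y1, y2) (z1m, z2m) (a1, a2) (z1, z2)))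

/-- Averaged local Q-function for agent 2 at time t. -/
noncomputable def Qbar2 (M : DecPOMDP S Y1 Y2 A1 A2 Z1 Z2)
    (π1 : ℕ → Y1 → Z1 → A1 × Z1 → ℝ) (π2 : ℕ → Y2 → Z2 → A2 × Z2 → ℝ)
    (lam : ℝ) (t : ℕ) (y2 : Y2) (z2m : Z2) (a2 : A2) (z2 : Z2) : ℝ :=
  (1/lam) * Real.log
    (∑ s : S, ∑ y1 : Y1, ∑ z1m : Z1, ∑ a1 : A1, ∑ z1 : Z1,
      (zetaM M π1 π2 t s (y1, y2) (z1m, z2m) / marg2 M π1 π2 t y2 z2m) *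
      π1 t y1 z1m (a1, z1) *
      Real.exp (lam * Qfun M π1 π2 lam t s (y1, y2) (z1m, z2m) (a1, a2) (z1, z2)))

/-- `g` is a greedy update for agent 1 at time `t`: at each (y¹,z¹₋) with positive
marginal probability it selects a maximizer of the averaged local Q-function. -/
def IsGreedy1 (M : DecPOMDP S Y1 Y2 A1 A2 Z1 Z2)
    (π1 : ℕ → Y1 → Z1 → A1 × Z1 → ℝ) (π2 : ℕ → Y2 → Z2 → A2 × Z2 → ℝ)
    (lam : ℝ) (t : ℕ) (g : Y1 → Z1 → A1 × Z1) : Prop :=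
  ∀ y1 z1m, 0 < marg1 M π1 π2 t y1 z1m →
    ∀ a1 z1, Qbar1 M π1 π2 lam t y1 z1m a1 z1 ≤
      Qbar1 M π1 π2 lam t y1 z1m (g y1 z1m).1 (g y1 z1m).2

/-- `g` is a greedy update for agent 2 at time `t`. -/
def IsGreedy2 (M : DecPOMDP S Y1 Y2 A1 A2 Z1 Z2)
    (π1 : ℕ → Y1 → Z1 → A1 × Z1 → ℝ) (π2 : ℕ → Y2 → Z2 → A2 × Z2 → ℝ)
    (lam : ℝ) (t : ℕ) (g : Y2 → Z2 → A2 × Z2) : Prop :=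
  ∀ y2 z2m, 0 < marg2 M π1 π2 t y2 z2m →
    ∀ a2 z2, Qbar2 M π1 π2 lam t y2 z2m a2 z2 ≤
      Qbar2 M π1 π2 lam t y2 z2m (g y2 z2m).1 (g y2 z2m).2

/-- The (deterministic) stage rule that puts all mass on `g y z`. -/
noncomputable def detRule {Y Z A : Type} (g : Y → Z → A × Z) : Y → Z → A × Z → ℝ :=
  fun y z x => if x = g y z then 1 else 0

/-- The conservative mixture (1−α)·ρ + α·𝟙[(a,z) = g(y,z₋)] of a stage rule with a
deterministic greedy choice. -/
noncomputable def consRule {Y Z A : Type} (α : ℝ) (ρ : Y → Z → A × Z → ℝ)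
    (g : Y → Z → A × Z) : Y → Z → A × Z → ℝ :=
  fun y z x => (1 - α) * ρ y z x + α * (if x = g y z then 1 else 0)
set_option linter.unusedSectionVars false
section AuxProof

variable (M : DecPOMDP S Y1 Y2 A1 A2 Z1 Z2)
  (π1 : ℕ → Y1 → Z1 → A1 × Z1 → ℝ) (π2 : ℕ → Y2 → Z2 → A2 × Z2 → ℝ)
  (lam : ℝ) (t : ℕ)

lemma zetaM_nonneg (h1 : IsPolicy π1) (h2 : IsPolicy π2) (u : ℕ) :
    ∀ s y zm, 0 ≤ zetaM M π1 π2 u s y zm := by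
  induction u with
  | zero =>
    intro s y zm
    exact mul_nonneg (mul_nonneg (M.init_nonneg _) (M.phi1_nonneg _)) (M.phi2_nonneg _)
  | succ n ih =>
    intro s y zm
    simp only [zetaM]
    refine Finset.sum_nonneg fun s' _ => Finset.sum_nonneg fun y' _ =>
      Finset.sum_nonneg fun a' _ => Finset.sum_nonneg fun zm' _ => ?_
    exact mul_nonneg (mul_nonneg (ih s' y' zm')
      (mul_nonneg ((h1 n).1 _ _ _) ((h2 n).1 _ _ _))) (M.P_nonneg _ _ _)

lemma zetaM_update1 (ρ : Y1 → Z1 → A1 × Z1 → ℝ) :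
    ∀ u, u ≤ t → zetaM M (Function.update π1 t ρ) π2 u = zetaM M π1 π2 u := by
  intro u
  induction u with
  | zero => intro _; rfl
  | succ n ih =>
    intro hu
    have hn : n ≤ t := by omega
    have hnt : n ≠ t := by omega
    funext s y zm
    simp only [zetaM, ih hn, Function.update_of_ne hnt]

lemma zetaM_update2 (ρ : Y2 → Z2 → A2 × Z2 → ℝ) :
    ∀ u, u ≤ t → zetaM M π1 (Function.update π2 t ρ) u = zetaM M π1 π2 u := by
  intro u
  induction u with
  | zero => intro _; rfl
  | succ n ih =>
    intro hu
    have hn : n ≤ t := by omega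
    have hnt : n ≠ t := by omega
    funext s y zm
    simp only [zetaM, ih hn, Function.update_of_ne hnt]

lemma Qaux_update1 (ρ : Y1 → Z1 → A1 × Z1 → ℝ) (htT : t < M.T) :
    ∀ m, m ≤ M.T - 1 - t →
      Qaux M (Function.update π1 t ρ) π2 lam m = Qaux M π1 π2 lam m := by
  intro m
  induction m with
  | zero => intro _; rfl
  | succ n ih =>
    intro hm
    have hn : n ≤ M.T - 1 - t := by omega
    have hnt : M.T - 1 - n ≠ t := by omega
    funext s y zm a z
    simp only [Qaux, ih hn, Function.update_of_ne hnt]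

lemma Qaux_update2 (ρ : Y2 → Z2 → A2 × Z2 → ℝ) (htT : t < M.T) :
    ∀ m, m ≤ M.T - 1 - t →
      Qaux M π1 (Function.update π2 t ρ) lam m = Qaux M π1 π2 lam m := by
  intro m
  induction m with
  | zero => intro _; rfl
  | succ n ih =>
    intro hm
    have hn : n ≤ M.T - 1 - t := by omega
    have hnt : M.T - 1 - n ≠ t := by omega
    funext s y zm a z
    simp only [Qaux, ih hn, Function.update_of_ne hnt]

lemma Qfun_update1 (ρ : Y1 → Z1 → A1 × Z1 → ℝ) (htT : t < M.T) :
    Qfun M (Function.update π1 t ρ) π2 lam t = Qfun M π1 π2 lam t :=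
  Qaux_update1 M π1 π2 lam t ρ htT (M.T - 1 - t) le_rfl

lemma Qfun_update2 (ρ : Y2 → Z2 → A2 × Z2 → ℝ) (htT : t < M.T) :
    Qfun M π1 (Function.update π2 t ρ) lam t = Qfun M π1 π2 lam t :=
  Qaux_update2 M π1 π2 lam t ρ htT (M.T - 1 - t) le_rfl

/-- Local weight function for agent 1. -/
noncomputable def W1 (y1 : Y1) (z1m : Z1) (a1 : A1) (z1 : Z1) : ℝ :=
  ∑ v : S × Y2 × Z2 × A2 × Z2,
    zetaM M π1 π2 t v.1 (y1, v.2.1) (z1m, v.2.2.1) *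
    π2 t v.2.1 v.2.2.1 (v.2.2.2.1, v.2.2.2.2) *
    Real.exp (lam * Qfun M π1 π2 lam t v.1 (y1, v.2.1) (z1m, v.2.2.1)
      (a1, v.2.2.2.1) (z1, v.2.2.2.2))

/-- Local weight function for agent 2. -/
noncomputable def W2 (y2 : Y2) (z2m : Z2) (a2 : A2) (z2 : Z2) : ℝ :=
  ∑ v : S × Y1 × Z1 × A1 × Z1,
    zetaM M π1 π2 t v.1 (v.2.1, y2) (v.2.2.1, z2m) *
    π1 t v.2.1 v.2.2.1 (v.2.2.2.1, v.2.2.2.2) *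
    Real.exp (lam * Qfun M π1 π2 lam t v.1 (v.2.1, y2) (v.2.2.1, z2m)
      (v.2.2.2.1, a2) (v.2.2.2.2, z2))

lemma marg1_eq (y1 : Y1) (z1m : Z1) :
    marg1 M π1 π2 t y1 z1m =
      ∑ v : S × Y2 × Z2, zetaM M π1 π2 t v.1 (y1, v.2.1) (z1m, v.2.2) := by
  simp [marg1, Fintype.sum_prod_type]

lemma marg2_eq (y2 : Y2) (z2m : Z2) :
    marg2 M π1 π2 t y2 z2m =
      ∑ v : S × Y1 × Z1, zetaM M π1 π2 t v.1 (v.2.1, y2) (v.2.2, z2m) := by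
  simp [marg2, Fintype.sum_prod_type]

lemma Qbar1_eq (y1 : Y1) (z1m : Z1) (a1 : A1) (z1 : Z1) :
    Qbar1 M π1 π2 lam t y1 z1m a1 z1 =
      (1/lam) * Real.log
        (W1 M π1 π2 lam t y1 z1m a1 z1 / marg1 M π1 π2 t y1 z1m) := by
  simp only [Qbar1, W1, Fintype.sum_prod_type, div_mul_eq_mul_div, Finset.sum_div]

lemma Qbar2_eq (y2 : Y2) (z2m : Z2) (a2 : A2) (z2 : Z2) :
    Qbar2 M π1 π2 lam t y2 z2m a2 z2 =
      (1/lam) * Real.log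
        (W2 M π1 π2 lam t y2 z2m a2 z2 / marg2 M π1 π2 t y2 z2m) := by
  simp only [Qbar2, W2, Fintype.sum_prod_type, div_mul_eq_mul_div, Finset.sum_div]
lemma W1_nonneg (h1 : IsPolicy π1) (h2 : IsPolicy π2) (y1 : Y1) (z1m : Z1) (a1 : A1) (z1 : Z1) :
    0 ≤ W1 M π1 π2 lam t y1 z1m a1 z1 :=
  Finset.sum_nonneg fun v _ => mul_nonneg (mul_nonneg
    (zetaM_nonneg M π1 π2 h1 h2 t _ _ _) ((h2 t).1 _ _ _)) (Real.exp_pos _).le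

lemma W2_nonneg (h1 : IsPolicy π1) (h2 : IsPolicy π2) (y2 : Y2) (z2m : Z2) (a2 : A2) (z2 : Z2) :
    0 ≤ W2 M π1 π2 lam t y2 z2m a2 z2 :=
  Finset.sum_nonneg fun v _ => mul_nonneg (mul_nonneg
    (zetaM_nonneg M π1 π2 h1 h2 t _ _ _) ((h1 t).1 _ _ _)) (Real.exp_pos _).le

lemma marg1_nonneg (h1 : IsPolicy π1) (h2 : IsPolicy π2) (y1 : Y1) (z1m : Z1) :
    0 ≤ marg1 M π1 π2 t y1 z1m := by
  rw [marg1_eq]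
  exact Finset.sum_nonneg fun v _ => zetaM_nonneg M π1 π2 h1 h2 t _ _ _

lemma marg2_nonneg (h1 : IsPolicy π1) (h2 : IsPolicy π2) (y2 : Y2) (z2m : Z2) :
    0 ≤ marg2 M π1 π2 t y2 z2m := by
  rw [marg2_eq]
  exact Finset.sum_nonneg fun v _ => zetaM_nonneg M π1 π2 h1 h2 t _ _ _

lemma zeta_zero_of_marg1 (h1 : IsPolicy π1) (h2 : IsPolicy π2) (y1 : Y1) (z1m : Z1)
    (h : marg1 M π1 π2 t y1 z1m = 0) :
    ∀ s y2 z2m, zetaM M π1 π2 t s (y1, y2) (z1m, z2m) = 0 := by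
  rw [marg1_eq] at h
  have := (Finset.sum_eq_zero_iff_of_nonneg
    (fun v _ => zetaM_nonneg M π1 π2 h1 h2 t v.1 (y1, v.2.1) (z1m, v.2.2))).mp h
  intro s y2 z2m
  exact this (s, y2, z2m) (Finset.mem_univ _)

lemma zeta_zero_of_marg2 (h1 : IsPolicy π1) (h2 : IsPolicy π2) (y2 : Y2) (z2m : Z2)
    (h : marg2 M π1 π2 t y2 z2m = 0) :
    ∀ s y1 z1m, zetaM M π1 π2 t s (y1, y2) (z1m, z2m) = 0 := by
  rw [marg2_eq] at h
  have := (Finset.sum_eq_zero_iff_of_nonneg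
    (fun v _ => zetaM_nonneg M π1 π2 h1 h2 t v.1 (v.2.1, y2) (v.2.2, z2m))).mp h
  intro s y1 z1m
  exact this (s, y1, z1m) (Finset.mem_univ _)

lemma W1_zero_of_marg1 (h1 : IsPolicy π1) (h2 : IsPolicy π2) (y1 : Y1) (z1m : Z1)
    (h : marg1 M π1 π2 t y1 z1m = 0) (a1 : A1) (z1 : Z1) :
    W1 M π1 π2 lam t y1 z1m a1 z1 = 0 :=
  Finset.sum_eq_zero fun v _ => by
    rw [zeta_zero_of_marg1 M π1 π2 t h1 h2 y1 z1m h, zero_mul, zero_mul]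

lemma W2_zero_of_marg2 (h1 : IsPolicy π1) (h2 : IsPolicy π2) (y2 : Y2) (z2m : Z2)
    (h : marg2 M π1 π2 t y2 z2m = 0) (a2 : A2) (z2 : Z2) :
    W2 M π1 π2 lam t y2 z2m a2 z2 = 0 :=
  Finset.sum_eq_zero fun v _ => by
    rw [zeta_zero_of_marg2 M π1 π2 t h1 h2 y2 z2m h, zero_mul, zero_mul]

lemma exists_pos_of_sum_pos {ι : Type*} [Fintype ι] {f : ι → ℝ} (h : 0 < ∑ i, f i) :
    ∃ i, 0 < f i := by
  by_contra hc
  push_neg at hc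
  exact absurd (Finset.sum_nonpos fun i _ => hc i) (not_le.mpr h)

lemma rule_exists_pos {Y Z A : Type} [Fintype A] [Fintype Z] {ρ : Y → Z → A × Z → ℝ}
    (hρ : IsRule ρ) (y : Y) (z : Z) : ∃ x, 0 < ρ y z x := by
  apply exists_pos_of_sum_pos
  rw [hρ.2 y z]
  norm_num

lemma W1_pos (h1 : IsPolicy π1) (h2 : IsPolicy π2) (y1 : Y1) (z1m : Z1)
    (hm : 0 < marg1 M π1 π2 t y1 z1m) (a1 : A1) (z1 : Z1) :
    0 < W1 M π1 π2 lam t y1 z1m a1 z1 := by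
  rw [marg1_eq] at hm
  obtain ⟨v0, hv0⟩ := exists_pos_of_sum_pos hm
  obtain ⟨x0, hx0⟩ := rule_exists_pos (h2 t) v0.2.1 v0.2.2
  refine Finset.sum_pos' (fun v _ => mul_nonneg (mul_nonneg
    (zetaM_nonneg M π1 π2 h1 h2 t _ _ _) ((h2 t).1 _ _ _)) (Real.exp_pos _).le)
    ⟨(v0.1, v0.2.1, v0.2.2, x0.1, x0.2), Finset.mem_univ _, ?_⟩
  exact mul_pos (mul_pos hv0 hx0) (Real.exp_pos _)

lemma W2_pos (h1 : IsPolicy π1) (h2 : IsPolicy π2) (y2 : Y2) (z2m : Z2)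
    (hm : 0 < marg2 M π1 π2 t y2 z2m) (a2 : A2) (z2 : Z2) :
    0 < W2 M π1 π2 lam t y2 z2m a2 z2 := by
  rw [marg2_eq] at hm
  obtain ⟨v0, hv0⟩ := exists_pos_of_sum_pos hm
  obtain ⟨x0, hx0⟩ := rule_exists_pos (h1 t) v0.2.1 v0.2.2
  refine Finset.sum_pos' (fun v _ => mul_nonneg (mul_nonneg
    (zetaM_nonneg M π1 π2 h1 h2 t _ _ _) ((h1 t).1 _ _ _)) (Real.exp_pos _).le)
    ⟨(v0.1, v0.2.1, v0.2.2, x0.1, x0.2), Finset.mem_univ _, ?_⟩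
  exact mul_pos (mul_pos hv0 hx0) (Real.exp_pos _)

lemma W1_le_greedy (h1 : IsPolicy π1) (h2 : IsPolicy π2) (hlam : 0 < lam)
    (g : Y1 → Z1 → A1 × Z1) (hg : IsGreedy1 M π1 π2 lam t g) (y1 : Y1) (z1m : Z1)
    (a1 : A1) (z1 : Z1) :
    W1 M π1 π2 lam t y1 z1m a1 z1 ≤
      W1 M π1 π2 lam t y1 z1m (g y1 z1m).1 (g y1 z1m).2 := by
  by_cases hm : 0 < marg1 M π1 π2 t y1 z1m
  · have hq := hg y1 z1m hm a1 z1
    rw [Qbar1_eq, Qbar1_eq] at hq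
    have hx : 0 < W1 M π1 π2 lam t y1 z1m a1 z1 / marg1 M π1 π2 t y1 z1m :=
      div_pos (W1_pos M π1 π2 lam t h1 h2 y1 z1m hm a1 z1) hm
    have hy : 0 < W1 M π1 π2 lam t y1 z1m (g y1 z1m).1 (g y1 z1m).2 /
        marg1 M π1 π2 t y1 z1m :=
      div_pos (W1_pos M π1 π2 lam t h1 h2 y1 z1m hm _ _) hm
    have h1l : (0:ℝ) < 1/lam := by positivity
    have hlog := (mul_le_mul_iff_right₀ h1l).mp hq
    have := (Real.log_le_log_iff hx hy).mp hlog
    exact (div_le_div_iff_of_pos_right hm).mp this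
  · have hm0 : marg1 M π1 π2 t y1 z1m = 0 :=
      le_antisymm (not_lt.mp hm) (marg1_nonneg M π1 π2 t h1 h2 y1 z1m)
    rw [W1_zero_of_marg1 M π1 π2 lam t h1 h2 y1 z1m hm0,
      W1_zero_of_marg1 M π1 π2 lam t h1 h2 y1 z1m hm0]

lemma W2_le_greedy (h1 : IsPolicy π1) (h2 : IsPolicy π2) (hlam : 0 < lam)
    (g : Y2 → Z2 → A2 × Z2) (hg : IsGreedy2 M π1 π2 lam t g) (y2 : Y2) (z2m : Z2)
    (a2 : A2) (z2 : Z2) :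
    W2 M π1 π2 lam t y2 z2m a2 z2 ≤
      W2 M π1 π2 lam t y2 z2m (g y2 z2m).1 (g y2 z2m).2 := by
  by_cases hm : 0 < marg2 M π1 π2 t y2 z2m
  · have hq := hg y2 z2m hm a2 z2
    rw [Qbar2_eq, Qbar2_eq] at hq
    have hx : 0 < W2 M π1 π2 lam t y2 z2m a2 z2 / marg2 M π1 π2 t y2 z2m :=
      div_pos (W2_pos M π1 π2 lam t h1 h2 y2 z2m hm a2 z2) hm
    have hy : 0 < W2 M π1 π2 lam t y2 z2m (g y2 z2m).1 (g y2 z2m).2 /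
        marg2 M π1 π2 t y2 z2m :=
      div_pos (W2_pos M π1 π2 lam t h1 h2 y2 z2m hm _ _) hm
    have h1l : (0:ℝ) < 1/lam := by positivity
    have hlog := (mul_le_mul_iff_right₀ h1l).mp hq
    have := (Real.log_le_log_iff hx hy).mp hlog
    exact (div_le_div_iff_of_pos_right hm).mp this
  · have hm0 : marg2 M π1 π2 t y2 z2m = 0 :=
      le_antisymm (not_lt.mp hm) (marg2_nonneg M π1 π2 t h1 h2 y2 z2m)
    rw [W2_zero_of_marg2 M π1 π2 lam t h1 h2 y2 z2m hm0,
      W2_zero_of_marg2 M π1 π2 lam t h1 h2 y2 z2m hm0]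
lemma Jrisk_eq_F1 (ρ : Y1 → Z1 → A1 × Z1 → ℝ) (htT : t < M.T) :
    Jrisk M (Function.update π1 t ρ) π2 lam t =
      (1/lam) * Real.log (∑ w : Y1 × Z1, ∑ x : A1 × Z1,
        ρ w.1 w.2 x * W1 M π1 π2 lam t w.1 w.2 x.1 x.2) := by
  rw [Jrisk, zetaM_update1 M π1 π2 t ρ t le_rfl, Qfun_update1 M π1 π2 lam t ρ htT,
    Function.update_self]
  congr 1
  congr 1
  calc
    (∑ s : S, ∑ y : Y1 × Y2, ∑ zm : Z1 × Z2, ∑ a : A1 × A2, ∑ z : Z1 × Z2,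
        zetaM M π1 π2 t s y zm *
        (ρ y.1 zm.1 (a.1, z.1) * π2 t y.2 zm.2 (a.2, z.2)) *
        Real.exp (lam * Qfun M π1 π2 lam t s y zm a z))
      = ∑ p : S × (Y1 × Y2) × (Z1 × Z2) × (A1 × A2) × (Z1 × Z2),
          zetaM M π1 π2 t p.1 p.2.1 p.2.2.1 *
          (ρ p.2.1.1 p.2.2.1.1 (p.2.2.2.1.1, p.2.2.2.2.1) *
            π2 t p.2.1.2 p.2.2.1.2 (p.2.2.2.1.2, p.2.2.2.2.2)) *
          Real.exp (lam * Qfun M π1 π2 lam t p.1 p.2.1 p.2.2.1 p.2.2.2.1 p.2.2.2.2) := by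
        simp only [Fintype.sum_prod_type]
    _ = ∑ u : ((Y1 × Z1) × (A1 × Z1)) × (S × Y2 × Z2 × A2 × Z2),
          ρ u.1.1.1 u.1.1.2 u.1.2 *
          (zetaM M π1 π2 t u.2.1 (u.1.1.1, u.2.2.1) (u.1.1.2, u.2.2.2.1) *
            π2 t u.2.2.1 u.2.2.2.1 (u.2.2.2.2.1, u.2.2.2.2.2) *
            Real.exp (lam * Qfun M π1 π2 lam t u.2.1 (u.1.1.1, u.2.2.1)
              (u.1.1.2, u.2.2.2.1) (u.1.2.1, u.2.2.2.2.1) (u.1.2.2, u.2.2.2.2.2))) := by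
        refine Fintype.sum_equiv
          ⟨fun p => (((p.2.1.1, p.2.2.1.1), (p.2.2.2.1.1, p.2.2.2.2.1)),
              (p.1, p.2.1.2, p.2.2.1.2, p.2.2.2.1.2, p.2.2.2.2.2)),
            fun u => (u.2.1, (u.1.1.1, u.2.2.1), (u.1.1.2, u.2.2.2.1),
              (u.1.2.1, u.2.2.2.2.1), (u.1.2.2, u.2.2.2.2.2)),
            fun p => rfl, fun u => rfl⟩ _ _ ?_
        rintro ⟨s, ⟨yy1, yy2⟩, ⟨zz1, zz2⟩, ⟨aa1, aa2⟩, ⟨zb1, zb2⟩⟩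
        dsimp
        ring
    _ = ∑ w : Y1 × Z1, ∑ x : A1 × Z1,
          ρ w.1 w.2 x * W1 M π1 π2 lam t w.1 w.2 x.1 x.2 := by
        simp only [W1, Finset.mul_sum, Fintype.sum_prod_type]

lemma Jrisk_eq_F2 (ρ : Y2 → Z2 → A2 × Z2 → ℝ) (htT : t < M.T) :
    Jrisk M π1 (Function.update π2 t ρ) lam t =
      (1/lam) * Real.log (∑ w : Y2 × Z2, ∑ x : A2 × Z2,
        ρ w.1 w.2 x * W2 M π1 π2 lam t w.1 w.2 x.1 x.2) := by
  rw [Jrisk, zetaM_update2 M π1 π2 t ρ t le_rfl, Qfun_update2 M π1 π2 lam t ρ htT,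
    Function.update_self]
  congr 1
  congr 1
  calc
    (∑ s : S, ∑ y : Y1 × Y2, ∑ zm : Z1 × Z2, ∑ a : A1 × A2, ∑ z : Z1 × Z2,
        zetaM M π1 π2 t s y zm *
        (π1 t y.1 zm.1 (a.1, z.1) * ρ y.2 zm.2 (a.2, z.2)) *
        Real.exp (lam * Qfun M π1 π2 lam t s y zm a z))
      = ∑ p : S × (Y1 × Y2) × (Z1 × Z2) × (A1 × A2) × (Z1 × Z2),
          zetaM M π1 π2 t p.1 p.2.1 p.2.2.1 *
          (π1 t p.2.1.1 p.2.2.1.1 (p.2.2.2.1.1, p.2.2.2.2.1) *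
            ρ p.2.1.2 p.2.2.1.2 (p.2.2.2.1.2, p.2.2.2.2.2)) *
          Real.exp (lam * Qfun M π1 π2 lam t p.1 p.2.1 p.2.2.1 p.2.2.2.1 p.2.2.2.2) := by
        simp only [Fintype.sum_prod_type]
    _ = ∑ u : ((Y2 × Z2) × (A2 × Z2)) × (S × Y1 × Z1 × A1 × Z1),
          ρ u.1.1.1 u.1.1.2 u.1.2 *
          (zetaM M π1 π2 t u.2.1 (u.2.2.1, u.1.1.1) (u.2.2.2.1, u.1.1.2) *
            π1 t u.2.2.1 u.2.2.2.1 (u.2.2.2.2.1, u.2.2.2.2.2) *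
            Real.exp (lam * Qfun M π1 π2 lam t u.2.1 (u.2.2.1, u.1.1.1)
              (u.2.2.2.1, u.1.1.2) (u.2.2.2.2.1, u.1.2.1) (u.2.2.2.2.2, u.1.2.2))) := by
        refine Fintype.sum_equiv
          ⟨fun p => (((p.2.1.2, p.2.2.1.2), (p.2.2.2.1.2, p.2.2.2.2.2)),
              (p.1, p.2.1.1, p.2.2.1.1, p.2.2.2.1.1, p.2.2.2.2.1)),
            fun u => (u.2.1, (u.2.2.1, u.1.1.1), (u.2.2.2.1, u.1.1.2),
              (u.2.2.2.2.1, u.1.2.1), (u.2.2.2.2.2, u.1.2.2)),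
            fun p => rfl, fun u => rfl⟩ _ _ ?_
        rintro ⟨s, ⟨yy1, yy2⟩, ⟨zz1, zz2⟩, ⟨aa1, aa2⟩, ⟨zb1, zb2⟩⟩
        dsimp
        ring
    _ = ∑ w : Y2 × Z2, ∑ x : A2 × Z2,
          ρ w.1 w.2 x * W2 M π1 π2 lam t w.1 w.2 x.1 x.2 := by
        simp only [W2, Finset.mul_sum, Fintype.sum_prod_type]
lemma greedy1_improve (h1 : IsPolicy π1) (h2 : IsPolicy π2) (hlam : 0 < lam)
    (htT : t < M.T) (α : ℝ) (hα : α ∈ Set.Icc (0:ℝ) 1)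
    (g : Y1 → Z1 → A1 × Z1) (hg : IsGreedy1 M π1 π2 lam t g) :
    Jrisk M π1 π2 lam t ≤
      Jrisk M (Function.update π1 t (consRule α (π1 t) g)) π2 lam t := by
  have hJold : Jrisk M π1 π2 lam t = (1/lam) * Real.log
      (∑ w : Y1 × Z1, ∑ x : A1 × Z1,
        π1 t w.1 w.2 x * W1 M π1 π2 lam t w.1 w.2 x.1 x.2) := by
    have h := Jrisk_eq_F1 M π1 π2 lam t (π1 t) htT
    rwa [Function.update_eq_self] at h
  have hind : ∀ w : Y1 × Z1, (∑ x : A1 × Z1,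
      (if x = g w.1 w.2 then (1:ℝ) else 0) * W1 M π1 π2 lam t w.1 w.2 x.1 x.2)
      = W1 M π1 π2 lam t w.1 w.2 (g w.1 w.2).1 (g w.1 w.2).2 := by
    intro w
    simp only [ite_mul, one_mul, zero_mul]
    rw [Finset.sum_ite_eq' Finset.univ (g w.1 w.2)
      (fun x => W1 M π1 π2 lam t w.1 w.2 x.1 x.2)]
    simp
  have hJnew : Jrisk M (Function.update π1 t (consRule α (π1 t) g)) π2 lam t
      = (1/lam) * Real.log
        ((1-α) * (∑ w : Y1 × Z1, ∑ x : A1 × Z1,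
            π1 t w.1 w.2 x * W1 M π1 π2 lam t w.1 w.2 x.1 x.2)
          + α * (∑ w : Y1 × Z1,
            W1 M π1 π2 lam t w.1 w.2 (g w.1 w.2).1 (g w.1 w.2).2)) := by
    rw [Jrisk_eq_F1 M π1 π2 lam t _ htT]
    congr 2
    calc
      (∑ w : Y1 × Z1, ∑ x : A1 × Z1,
          consRule α (π1 t) g w.1 w.2 x * W1 M π1 π2 lam t w.1 w.2 x.1 x.2)
        = ∑ w : Y1 × Z1, ∑ x : A1 × Z1,
            ((1-α) * (π1 t w.1 w.2 x * W1 M π1 π2 lam t w.1 w.2 x.1 x.2)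
              + α * ((if x = g w.1 w.2 then (1:ℝ) else 0) *
                  W1 M π1 π2 lam t w.1 w.2 x.1 x.2)) := by
          refine Finset.sum_congr rfl fun w _ => Finset.sum_congr rfl fun x _ => ?_
          simp only [consRule]; ring
      _ = (1-α) * (∑ w : Y1 × Z1, ∑ x : A1 × Z1,
              π1 t w.1 w.2 x * W1 M π1 π2 lam t w.1 w.2 x.1 x.2)
          + α * (∑ w : Y1 × Z1, ∑ x : A1 × Z1,
              (if x = g w.1 w.2 then (1:ℝ) else 0) *
                W1 M π1 π2 lam t w.1 w.2 x.1 x.2) := by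
          simp only [Finset.sum_add_distrib, ← Finset.mul_sum]
      _ = _ := by
          congr 1
          congr 1
          exact Finset.sum_congr rfl fun w _ => hind w
  have hBA : (∑ w : Y1 × Z1, ∑ x : A1 × Z1,
      π1 t w.1 w.2 x * W1 M π1 π2 lam t w.1 w.2 x.1 x.2)
      ≤ ∑ w : Y1 × Z1, W1 M π1 π2 lam t w.1 w.2 (g w.1 w.2).1 (g w.1 w.2).2 := by
    refine Finset.sum_le_sum fun w _ => ?_
    calc
      (∑ x : A1 × Z1, π1 t w.1 w.2 x * W1 M π1 π2 lam t w.1 w.2 x.1 x.2)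
        ≤ ∑ x : A1 × Z1, π1 t w.1 w.2 x *
            W1 M π1 π2 lam t w.1 w.2 (g w.1 w.2).1 (g w.1 w.2).2 :=
          Finset.sum_le_sum fun x _ => mul_le_mul_of_nonneg_left
            (W1_le_greedy M π1 π2 lam t h1 h2 hlam g hg w.1 w.2 x.1 x.2)
            ((h1 t).1 _ _ _)
      _ = (∑ x : A1 × Z1, π1 t w.1 w.2 x) *
            W1 M π1 π2 lam t w.1 w.2 (g w.1 w.2).1 (g w.1 w.2).2 :=
          (Finset.sum_mul _ _ _).symm
      _ = _ := by rw [(h1 t).2, one_mul]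
  have hAnn : (0:ℝ) ≤ ∑ w : Y1 × Z1, ∑ x : A1 × Z1,
      π1 t w.1 w.2 x * W1 M π1 π2 lam t w.1 w.2 x.1 x.2 :=
    Finset.sum_nonneg fun w _ => Finset.sum_nonneg fun x _ =>
      mul_nonneg ((h1 t).1 _ _ _) (W1_nonneg M π1 π2 lam t h1 h2 _ _ _ _)
  rw [hJold, hJnew]
  rcases eq_or_lt_of_le hAnn with hA0 | hApos
  · have hall := (Finset.sum_eq_zero_iff_of_nonneg
      (fun w _ => Finset.sum_nonneg fun x _ =>
        mul_nonneg ((h1 t).1 _ _ _) (W1_nonneg M π1 π2 lam t h1 h2 _ _ _ _))).mp hA0.symm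
    have hB0 : (∑ w : Y1 × Z1,
        W1 M π1 π2 lam t w.1 w.2 (g w.1 w.2).1 (g w.1 w.2).2) = 0 := by
      refine Finset.sum_eq_zero fun w _ => ?_
      by_cases hm : 0 < marg1 M π1 π2 t w.1 w.2
      · exfalso
        obtain ⟨x0, hx0⟩ := rule_exists_pos (h1 t) w.1 w.2
        have hpos : 0 < ∑ x : A1 × Z1,
            π1 t w.1 w.2 x * W1 M π1 π2 lam t w.1 w.2 x.1 x.2 :=
          Finset.sum_pos' (fun x _ => mul_nonneg ((h1 t).1 _ _ _)
              (W1_nonneg M π1 π2 lam t h1 h2 _ _ _ _))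
            ⟨x0, Finset.mem_univ _,
              mul_pos hx0 (W1_pos M π1 π2 lam t h1 h2 w.1 w.2 hm x0.1 x0.2)⟩
        rw [hall w (Finset.mem_univ w)] at hpos
        exact lt_irrefl 0 hpos
      · exact W1_zero_of_marg1 M π1 π2 lam t h1 h2 w.1 w.2
          (le_antisymm (not_lt.mp hm) (marg1_nonneg M π1 π2 t h1 h2 w.1 w.2)) _ _
    rw [← hA0, hB0]
    simp
  · have hcons : (∑ w : Y1 × Z1, ∑ x : A1 × Z1,
        π1 t w.1 w.2 x * W1 M π1 π2 lam t w.1 w.2 x.1 x.2)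
        ≤ (1-α) * (∑ w : Y1 × Z1, ∑ x : A1 × Z1,
            π1 t w.1 w.2 x * W1 M π1 π2 lam t w.1 w.2 x.1 x.2)
          + α * (∑ w : Y1 × Z1,
            W1 M π1 π2 lam t w.1 w.2 (g w.1 w.2).1 (g w.1 w.2).2) := by
      nlinarith [hα.1, hα.2]
    exact mul_le_mul_of_nonneg_left (Real.log_le_log hApos hcons) (by positivity)
lemma greedy2_improve (h1 : IsPolicy π1) (h2 : IsPolicy π2) (hlam : 0 < lam)
    (htT : t < M.T) (α : ℝ) (hα : α ∈ Set.Icc (0:ℝ) 1)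
    (g : Y2 → Z2 → A2 × Z2) (hg : IsGreedy2 M π1 π2 lam t g) :
    Jrisk M π1 π2 lam t ≤
      Jrisk M π1 (Function.update π2 t (consRule α (π2 t) g)) lam t := by
  have hJold : Jrisk M π1 π2 lam t = (1/lam) * Real.log
      (∑ w : Y2 × Z2, ∑ x : A2 × Z2,
        π2 t w.1 w.2 x * W2 M π1 π2 lam t w.1 w.2 x.1 x.2) := by
    have h := Jrisk_eq_F2 M π1 π2 lam t (π2 t) htT
    rwa [Function.update_eq_self] at h
  have hind : ∀ w : Y2 × Z2, (∑ x : A2 × Z2,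
      (if x = g w.1 w.2 then (1:ℝ) else 0) * W2 M π1 π2 lam t w.1 w.2 x.1 x.2)
      = W2 M π1 π2 lam t w.1 w.2 (g w.1 w.2).1 (g w.1 w.2).2 := by
    intro w
    simp only [ite_mul, one_mul, zero_mul]
    rw [Finset.sum_ite_eq' Finset.univ (g w.1 w.2)
      (fun x => W2 M π1 π2 lam t w.1 w.2 x.1 x.2)]
    simp
  have hJnew : Jrisk M π1 (Function.update π2 t (consRule α (π2 t) g)) lam t
      = (1/lam) * Real.log
        ((1-α) * (∑ w : Y2 × Z2, ∑ x : A2 × Z2,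
            π2 t w.1 w.2 x * W2 M π1 π2 lam t w.1 w.2 x.1 x.2)
          + α * (∑ w : Y2 × Z2,
            W2 M π1 π2 lam t w.1 w.2 (g w.1 w.2).1 (g w.1 w.2).2)) := by
    rw [Jrisk_eq_F2 M π1 π2 lam t _ htT]
    congr 2
    calc
      (∑ w : Y2 × Z2, ∑ x : A2 × Z2,
          consRule α (π2 t) g w.1 w.2 x * W2 M π1 π2 lam t w.1 w.2 x.1 x.2)
        = ∑ w : Y2 × Z2, ∑ x : A2 × Z2,
            ((1-α) * (π2 t w.1 w.2 x * W2 M π1 π2 lam t w.1 w.2 x.1 x.2)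
              + α * ((if x = g w.1 w.2 then (1:ℝ) else 0) *
                  W2 M π1 π2 lam t w.1 w.2 x.1 x.2)) := by
          refine Finset.sum_congr rfl fun w _ => Finset.sum_congr rfl fun x _ => ?_
          simp only [consRule]; ring
      _ = (1-α) * (∑ w : Y2 × Z2, ∑ x : A2 × Z2,
              π2 t w.1 w.2 x * W2 M π1 π2 lam t w.1 w.2 x.1 x.2)
          + α * (∑ w : Y2 × Z2, ∑ x : A2 × Z2,
              (if x = g w.1 w.2 then (1:ℝ) else 0) *
                W2 M π1 π2 lam t w.1 w.2 x.1 x.2) := by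
          simp only [Finset.sum_add_distrib, ← Finset.mul_sum]
      _ = _ := by
          congr 1
          congr 1
          exact Finset.sum_congr rfl fun w _ => hind w
  have hBA : (∑ w : Y2 × Z2, ∑ x : A2 × Z2,
      π2 t w.1 w.2 x * W2 M π1 π2 lam t w.1 w.2 x.1 x.2)
      ≤ ∑ w : Y2 × Z2, W2 M π1 π2 lam t w.1 w.2 (g w.1 w.2).1 (g w.1 w.2).2 := by
    refine Finset.sum_le_sum fun w _ => ?_
    calc
      (∑ x : A2 × Z2, π2 t w.1 w.2 x * W2 M π1 π2 lam t w.1 w.2 x.1 x.2)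
        ≤ ∑ x : A2 × Z2, π2 t w.1 w.2 x *
            W2 M π1 π2 lam t w.1 w.2 (g w.1 w.2).1 (g w.1 w.2).2 :=
          Finset.sum_le_sum fun x _ => mul_le_mul_of_nonneg_left
            (W2_le_greedy M π1 π2 lam t h1 h2 hlam g hg w.1 w.2 x.1 x.2)
            ((h2 t).1 _ _ _)
      _ = (∑ x : A2 × Z2, π2 t w.1 w.2 x) *
            W2 M π1 π2 lam t w.1 w.2 (g w.1 w.2).1 (g w.1 w.2).2 :=
          (Finset.sum_mul _ _ _).symm
      _ = _ := by rw [(h2 t).2, one_mul]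
  have hAnn : (0:ℝ) ≤ ∑ w : Y2 × Z2, ∑ x : A2 × Z2,
      π2 t w.1 w.2 x * W2 M π1 π2 lam t w.1 w.2 x.1 x.2 :=
    Finset.sum_nonneg fun w _ => Finset.sum_nonneg fun x _ =>
      mul_nonneg ((h2 t).1 _ _ _) (W2_nonneg M π1 π2 lam t h1 h2 _ _ _ _)
  rw [hJold, hJnew]
  rcases eq_or_lt_of_le hAnn with hA0 | hApos
  · have hall := (Finset.sum_eq_zero_iff_of_nonneg
      (fun w _ => Finset.sum_nonneg fun x _ =>
        mul_nonneg ((h2 t).1 _ _ _) (W2_nonneg M π1 π2 lam t h1 h2 _ _ _ _))).mp hA0.symm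
    have hB0 : (∑ w : Y2 × Z2,
        W2 M π1 π2 lam t w.1 w.2 (g w.1 w.2).1 (g w.1 w.2).2) = 0 := by
      refine Finset.sum_eq_zero fun w _ => ?_
      by_cases hm : 0 < marg2 M π1 π2 t w.1 w.2
      · exfalso
        obtain ⟨x0, hx0⟩ := rule_exists_pos (h2 t) w.1 w.2
        have hpos : 0 < ∑ x : A2 × Z2,
            π2 t w.1 w.2 x * W2 M π1 π2 lam t w.1 w.2 x.1 x.2 :=
          Finset.sum_pos' (fun x _ => mul_nonneg ((h2 t).1 _ _ _)
              (W2_nonneg M π1 π2 lam t h1 h2 _ _ _ _))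
            ⟨x0, Finset.mem_univ _,
              mul_pos hx0 (W2_pos M π1 π2 lam t h1 h2 w.1 w.2 hm x0.1 x0.2)⟩
        rw [hall w (Finset.mem_univ w)] at hpos
        exact lt_irrefl 0 hpos
      · exact W2_zero_of_marg2 M π1 π2 lam t h1 h2 w.1 w.2
          (le_antisymm (not_lt.mp hm) (marg2_nonneg M π1 π2 t h1 h2 w.1 w.2)) _ _
    rw [← hA0, hB0]
    simp
  · have hcons : (∑ w : Y2 × Z2, ∑ x : A2 × Z2,
        π2 t w.1 w.2 x * W2 M π1 π2 lam t w.1 w.2 x.1 x.2)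
        ≤ (1-α) * (∑ w : Y2 × Z2, ∑ x : A2 × Z2,
            π2 t w.1 w.2 x * W2 M π1 π2 lam t w.1 w.2 x.1 x.2)
          + α * (∑ w : Y2 × Z2,
            W2 M π1 π2 lam t w.1 w.2 (g w.1 w.2).1 (g w.1 w.2).2) := by
      nlinarith [hα.1, hα.2]
    exact mul_le_mul_of_nonneg_left (Real.log_le_log hApos hcons) (by positivity)
end AuxProof


/-- **Corollary 1 (Conservative update improvement).**
For λ > 0, a joint policy (π1, π2), a time t < T, α ∈ [0,1], and either agent
i ∈ {1,2}: if π̄ⁱ_t is any greedy update for agent i at time t and π' is obtained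
from π by replacing the stage-t rule of agent i by the conservative rule
(1−α)·πⁱ_t + α·𝟙[· = π̄ⁱ_t], then J^λ_{t:T}(π') ≥ J^λ_{t:T}(π). -/
theorem conservative_update_improvement
    (M : DecPOMDP S Y1 Y2 A1 A2 Z1 Z2)
    (π1 : ℕ → Y1 → Z1 → A1 × Z1 → ℝ) (π2 : ℕ → Y2 → Z2 → A2 × Z2 → ℝ)
    (hπ1 : IsPolicy π1) (hπ2 : IsPolicy π2)
    (lam : ℝ) (hlam : 0 < lam) (t : ℕ) (ht : t < M.T)
    (α : ℝ) (hα : α ∈ Set.Icc (0:ℝ) 1) :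
    (∀ g : Y1 → Z1 → A1 × Z1, IsGreedy1 M π1 π2 lam t g →
      Jrisk M π1 π2 lam t ≤
        Jrisk M (Function.update π1 t (consRule α (π1 t) g)) π2 lam t) ∧
    (∀ g : Y2 → Z2 → A2 × Z2, IsGreedy2 M π1 π2 lam t g →
      Jrisk M π1 π2 lam t ≤
        Jrisk M π1 (Function.update π2 t (consRule α (π2 t) g)) lam t) := by
  constructor
  · intro g hg
    exact greedy1_improve M π1 π2 lam t hπ1 hπ2 hlam ht α hα g hg
  · intro g hg
    exact greedy2_improve M π1 π2 lam t hπ1 hπ2 hlam ht α hα g hg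
end

section
/- Key inequality in the proof of Proposition 1 (inequality (eq:ineq-2)): Fix λ > 0, a joint agent-state based policy π, a time t, and let π̄²_t be any greedy update for agent 2 at time t. Then Σ_{s,y,z₋,a¹,z¹} ζ^π_t(s,y,z₋)·π¹_t(a¹,z¹|y¹,z¹₋)·exp(λ·Q^π_t(s,y,z₋,(a¹,π̄²_t(y²,z²₋)_A),(z¹,π̄²_t(y²,z²₋)_Z))) ≥ Σ_{s,y,z₋,a,z} ζ^π_t(s,y,z₋)·π¹_t(a¹,z¹|y¹,z¹₋)·π²_t(a²,z²|y²,z²₋)·exp(λ·Q^π_t(s,y,z₋,a,z)), where π̄²_t(y²,z²₋) = (π̄²_t(y²,z²₋)_A, π̄²_t(y²,z²₋)_Z) ∈ A² × Z² denotes the deterministic greedy choice. -/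
open Finset
open scoped Classical

variable {S Y1 Y2 A1 A2 Z1 Z2 : Type}
  [Fintype S] [Fintype Y1] [Fintype Y2] [Fintype A1] [Fintype A2]
  [Fintype Z1] [Fintype Z2]
  [Nonempty S] [Nonempty Y1] [Nonempty Y2] [Nonempty A1] [Nonempty A2]
  [Nonempty Z1] [Nonempty Z2]

set_option maxHeartbeats 1000000
set_option linter.unusedSectionVars false

section AuxRegroup
variable {S' Y1' Y2' Z1' Z2' A1' A2' : Type}
    [Fintype S'] [Fintype Y1'] [Fintype Y2'] [Fintype Z1'] [Fintype Z2'] [Fintype A1'] [Fintype A2']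

set_option maxHeartbeats 1000000 in
lemma sum_grouped9 (f : S' → Y1' → Y2' → Z1' → Z2' → A1' → A2' → Z1' → Z2' → ℝ) :
    (∑ s : S', ∑ y : Y1' × Y2', ∑ zm : Z1' × Z2', ∑ a : A1' × A2', ∑ z : Z1' × Z2',
        f s y.1 y.2 zm.1 zm.2 a.1 a.2 z.1 z.2)
    = ∑ y2 : Y2', ∑ z2m : Z2', ∑ x : A2' × Z2', ∑ s : S', ∑ y1 : Y1', ∑ z1m : Z1', ∑ a1 : A1', ∑ z1 : Z1',
        f s y1 y2 z1m z2m a1 x.1 z1 x.2 := by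
  have h1 : (∑ p : S' × Y1' × Y2' × Z1' × Z2' × A1' × A2' × Z1' × Z2',
      f p.1 p.2.1 p.2.2.1 p.2.2.2.1 p.2.2.2.2.1 p.2.2.2.2.2.1 p.2.2.2.2.2.2.1
        p.2.2.2.2.2.2.2.1 p.2.2.2.2.2.2.2.2)
      = (∑ s : S', ∑ y : Y1' × Y2', ∑ zm : Z1' × Z2', ∑ a : A1' × A2', ∑ z : Z1' × Z2',
        f s y.1 y.2 zm.1 zm.2 a.1 a.2 z.1 z.2) := by
    simp [Fintype.sum_prod_type]
  have h2 : (∑ q : Y2' × Z2' × (A2' × Z2') × S' × Y1' × Z1' × A1' × Z1',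
      f q.2.2.2.1 q.2.2.2.2.1 q.1 q.2.2.2.2.2.1 q.2.1 q.2.2.2.2.2.2.1 q.2.2.1.1
        q.2.2.2.2.2.2.2 q.2.2.1.2)
      = ∑ y2 : Y2', ∑ z2m : Z2', ∑ x : A2' × Z2', ∑ s : S', ∑ y1 : Y1', ∑ z1m : Z1', ∑ a1 : A1', ∑ z1 : Z1',
        f s y1 y2 z1m z2m a1 x.1 z1 x.2 := by
    simp [Fintype.sum_prod_type]
  rw [← h1, ← h2]
  exact Fintype.sum_equiv
    ⟨fun p => (p.2.2.1, (p.2.2.2.2.1, ((p.2.2.2.2.2.2.1, p.2.2.2.2.2.2.2.2),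
        (p.1, (p.2.1, (p.2.2.2.1, (p.2.2.2.2.2.1, p.2.2.2.2.2.2.2.1))))))),
     fun q => (q.2.2.2.1, (q.2.2.2.2.1, (q.1, (q.2.2.2.2.2.1, (q.2.1,
        (q.2.2.2.2.2.2.1, (q.2.2.1.1, (q.2.2.2.2.2.2.2, q.2.2.1.2)))))))),
     fun p => rfl, fun q => rfl⟩ _ _ (fun p => rfl)

set_option maxHeartbeats 1000000 in
lemma sum_grouped7 (f : S' → Y1' → Y2' → Z1' → Z2' → A1' → Z1' → ℝ) :
    (∑ s : S', ∑ y : Y1' × Y2', ∑ zm : Z1' × Z2', ∑ a1 : A1', ∑ z1 : Z1',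
        f s y.1 y.2 zm.1 zm.2 a1 z1)
    = ∑ y2 : Y2', ∑ z2m : Z2', ∑ s : S', ∑ y1 : Y1', ∑ z1m : Z1', ∑ a1 : A1', ∑ z1 : Z1',
        f s y1 y2 z1m z2m a1 z1 := by
  have h1 : (∑ p : S' × Y1' × Y2' × Z1' × Z2' × A1' × Z1',
      f p.1 p.2.1 p.2.2.1 p.2.2.2.1 p.2.2.2.2.1 p.2.2.2.2.2.1 p.2.2.2.2.2.2)
      = (∑ s : S', ∑ y : Y1' × Y2', ∑ zm : Z1' × Z2', ∑ a1 : A1', ∑ z1 : Z1',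
        f s y.1 y.2 zm.1 zm.2 a1 z1) := by
    simp [Fintype.sum_prod_type]
  have h2 : (∑ q : Y2' × Z2' × S' × Y1' × Z1' × A1' × Z1',
      f q.2.2.1 q.2.2.2.1 q.1 q.2.2.2.2.1 q.2.1 q.2.2.2.2.2.1 q.2.2.2.2.2.2)
      = ∑ y2 : Y2', ∑ z2m : Z2', ∑ s : S', ∑ y1 : Y1', ∑ z1m : Z1', ∑ a1 : A1', ∑ z1 : Z1',
        f s y1 y2 z1m z2m a1 z1 := by
    simp [Fintype.sum_prod_type]
  rw [← h1, ← h2]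
  exact Fintype.sum_equiv
    ⟨fun p => (p.2.2.1, (p.2.2.2.2.1, (p.1, (p.2.1, (p.2.2.2.1,
        (p.2.2.2.2.2.1, p.2.2.2.2.2.2)))))),
     fun q => (q.2.2.1, (q.2.2.2.1, (q.1, (q.2.2.2.2.1, (q.2.1,
        (q.2.2.2.2.2.1, q.2.2.2.2.2.2)))))),
     fun p => rfl, fun q => rfl⟩ _ _ (fun p => rfl)

end AuxRegroup

lemma zetaM_nonneg_s6 (M : DecPOMDP S Y1 Y2 A1 A2 Z1 Z2)
    (π1 : ℕ → Y1 → Z1 → A1 × Z1 → ℝ) (π2 : ℕ → Y2 → Z2 → A2 × Z2 → ℝ)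
    (hπ1 : IsPolicy π1) (hπ2 : IsPolicy π2) (t : ℕ) :
    ∀ s y zm, 0 ≤ zetaM M π1 π2 t s y zm := by
  induction t with
  | zero =>
    intro s y zm
    exact mul_nonneg (mul_nonneg (M.init_nonneg _) (M.phi1_nonneg _)) (M.phi2_nonneg _)
  | succ t ih =>
    intro s y zm
    refine Finset.sum_nonneg fun s' _ => Finset.sum_nonneg fun y' _ =>
      Finset.sum_nonneg fun a' _ => Finset.sum_nonneg fun zm' _ => ?_
    exact mul_nonneg (mul_nonneg (ih s' y' zm')
      (mul_nonneg ((hπ1 t).1 _ _ _) ((hπ2 t).1 _ _ _))) (M.P_nonneg _ _ _)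

/-- The per-(y2,z2m) grouped exponential sum, as a function of agent 2's (action, next state). -/
noncomputable def Fkey (M : DecPOMDP S Y1 Y2 A1 A2 Z1 Z2)
    (π1 : ℕ → Y1 → Z1 → A1 × Z1 → ℝ) (π2 : ℕ → Y2 → Z2 → A2 × Z2 → ℝ)
    (lam : ℝ) (t : ℕ) (y2 : Y2) (z2m : Z2) (x : A2 × Z2) : ℝ :=
  ∑ s : S, ∑ y1 : Y1, ∑ z1m : Z1, ∑ a1 : A1, ∑ z1 : Z1,
    zetaM M π1 π2 t s (y1, y2) (z1m, z2m) * π1 t y1 z1m (a1, z1) *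
    Real.exp (lam * Qfun M π1 π2 lam t s (y1, y2) (z1m, z2m) (a1, x.1) (z1, x.2))

/-- **Key inequality (eq:ineq-2) in the proof of Proposition 1.**
For λ > 0, a joint policy (π1, π2), a time t < T and any greedy update `g` for
agent 2 at time t: substituting the deterministic greedy choice of agent 2
cannot decrease the exponential performance from time t. -/
theorem key_inequality_ineq2
    (M : DecPOMDP S Y1 Y2 A1 A2 Z1 Z2)
    (π1 : ℕ → Y1 → Z1 → A1 × Z1 → ℝ) (π2 : ℕ → Y2 → Z2 → A2 × Z2 → ℝ)
    (hπ1 : IsPolicy π1) (hπ2 : IsPolicy π2)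
    (lam : ℝ) (hlam : 0 < lam) (t : ℕ) (ht : t < M.T)
    (g : Y2 → Z2 → A2 × Z2) (hg : IsGreedy2 M π1 π2 lam t g) :
    (∑ s : S, ∑ y : Y1 × Y2, ∑ zm : Z1 × Z2, ∑ a : A1 × A2, ∑ z : Z1 × Z2,
        zetaM M π1 π2 t s y zm *
        (π1 t y.1 zm.1 (a.1, z.1) * π2 t y.2 zm.2 (a.2, z.2)) *
        Real.exp (lam * Qfun M π1 π2 lam t s y zm a z))
    ≤ ∑ s : S, ∑ y : Y1 × Y2, ∑ zm : Z1 × Z2, ∑ a1 : A1, ∑ z1 : Z1,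
        zetaM M π1 π2 t s y zm * π1 t y.1 zm.1 (a1, z1) *
        Real.exp (lam * Qfun M π1 π2 lam t s y zm
          (a1, (g y.2 zm.2).1) (z1, (g y.2 zm.2).2)) := by
  classical
  have hζnn : ∀ t' s y zm, 0 ≤ zetaM M π1 π2 t' s y zm :=
    fun t' => zetaM_nonneg_s6 M π1 π2 hπ1 hπ2 t'
  have hFnn : ∀ y2 z2m x, 0 ≤ Fkey M π1 π2 lam t y2 z2m x := by
    intro y2 z2m x
    refine Finset.sum_nonneg fun _ _ => Finset.sum_nonneg fun _ _ =>
      Finset.sum_nonneg fun _ _ => Finset.sum_nonneg fun _ _ =>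
      Finset.sum_nonneg fun _ _ => ?_
    exact mul_nonneg (mul_nonneg (hζnn t _ _ _) ((hπ1 t).1 _ _ _)) (Real.exp_nonneg _)
  -- key per-group inequality
  have key : ∀ y2 z2m,
      (∑ x : A2 × Z2, π2 t y2 z2m x * Fkey M π1 π2 lam t y2 z2m x)
      ≤ Fkey M π1 π2 lam t y2 z2m (g y2 z2m) := by
    intro y2 z2m
    have hmnn : 0 ≤ marg2 M π1 π2 t y2 z2m := by
      refine Finset.sum_nonneg fun _ _ => Finset.sum_nonneg fun _ _ =>
        Finset.sum_nonneg fun _ _ => hζnn t _ _ _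
    rcases eq_or_lt_of_le hmnn with hm0 | hm
    · -- zero marginal: everything vanishes
      have hz : ∀ s y1 z1m, zetaM M π1 π2 t s (y1, y2) (z1m, z2m) = 0 := by
        intro s y1 z1m
        refine le_antisymm ?_ (hζnn t _ _ _)
        calc zetaM M π1 π2 t s (y1, y2) (z1m, z2m)
            ≤ ∑ z1m' : Z1, zetaM M π1 π2 t s (y1, y2) (z1m', z2m) :=
              Finset.single_le_sum
                (f := fun z1m' => zetaM M π1 π2 t s (y1, y2) (z1m', z2m))
                (fun i _ => hζnn t _ _ _) (Finset.mem_univ z1m)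
          _ ≤ ∑ y1' : Y1, ∑ z1m' : Z1, zetaM M π1 π2 t s (y1', y2) (z1m', z2m) :=
              Finset.single_le_sum
                (f := fun y1' => ∑ z1m' : Z1, zetaM M π1 π2 t s (y1', y2) (z1m', z2m))
                (fun i _ => Finset.sum_nonneg fun _ _ => hζnn t _ _ _) (Finset.mem_univ y1)
          _ ≤ ∑ s' : S, ∑ y1' : Y1, ∑ z1m' : Z1, zetaM M π1 π2 t s' (y1', y2) (z1m', z2m) :=
              Finset.single_le_sum
                (f := fun s' => ∑ y1' : Y1, ∑ z1m' : Z1, zetaM M π1 π2 t s' (y1', y2) (z1m', z2m))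
                (fun i _ => Finset.sum_nonneg fun _ _ => Finset.sum_nonneg fun _ _ =>
                  hζnn t _ _ _) (Finset.mem_univ s)
          _ = 0 := hm0.symm
      have hF0 : ∀ x, Fkey M π1 π2 lam t y2 z2m x = 0 := by
        intro x; simp [Fkey, hz]
      simp [hF0]
    · -- positive marginal: use greediness
      obtain ⟨s0, y10, z1m0, h0⟩ :
          ∃ s y1 z1m, 0 < zetaM M π1 π2 t s (y1, y2) (z1m, z2m) := by
        by_contra hcon
        push_neg at hcon
        have : marg2 M π1 π2 t y2 z2m = 0 := by
          refine Finset.sum_eq_zero fun s _ => Finset.sum_eq_zero fun y1 _ =>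
            Finset.sum_eq_zero fun z1m _ => le_antisymm (hcon s y1 z1m) (hζnn t _ _ _)
        rw [this] at hm; exact lt_irrefl 0 hm
      obtain ⟨w0, hw0⟩ : ∃ w : A1 × Z1, 0 < π1 t y10 z1m0 w := by
        by_contra hcon
        push_neg at hcon
        have h1 : (∑ w : A1 × Z1, π1 t y10 z1m0 w) = 0 :=
          Finset.sum_eq_zero fun w _ => le_antisymm (hcon w) ((hπ1 t).1 _ _ _)
        rw [(hπ1 t).2] at h1; norm_num at h1
      have hFpos : ∀ x, 0 < Fkey M π1 π2 lam t y2 z2m x := by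
        intro x
        have hw0' : 0 < π1 t y10 z1m0 (w0.1, w0.2) := by
          rw [Prod.mk.eta]; exact hw0
        refine Finset.sum_pos'
          (fun _ _ => Finset.sum_nonneg fun _ _ => Finset.sum_nonneg fun _ _ =>
            Finset.sum_nonneg fun _ _ => Finset.sum_nonneg fun _ _ =>
            mul_nonneg (mul_nonneg (hζnn t _ _ _) ((hπ1 t).1 _ _ _)) (Real.exp_nonneg _))
          ⟨s0, Finset.mem_univ _, ?_⟩
        refine Finset.sum_pos'
          (fun _ _ => Finset.sum_nonneg fun _ _ => Finset.sum_nonneg fun _ _ =>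
            Finset.sum_nonneg fun _ _ =>
            mul_nonneg (mul_nonneg (hζnn t _ _ _) ((hπ1 t).1 _ _ _)) (Real.exp_nonneg _))
          ⟨y10, Finset.mem_univ _, ?_⟩
        refine Finset.sum_pos'
          (fun _ _ => Finset.sum_nonneg fun _ _ => Finset.sum_nonneg fun _ _ =>
            mul_nonneg (mul_nonneg (hζnn t _ _ _) ((hπ1 t).1 _ _ _)) (Real.exp_nonneg _))
          ⟨z1m0, Finset.mem_univ _, ?_⟩
        refine Finset.sum_pos'
          (fun _ _ => Finset.sum_nonneg fun _ _ =>
            mul_nonneg (mul_nonneg (hζnn t _ _ _) ((hπ1 t).1 _ _ _)) (Real.exp_nonneg _))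
          ⟨w0.1, Finset.mem_univ _, ?_⟩
        refine Finset.sum_pos'
          (fun _ _ =>
            mul_nonneg (mul_nonneg (hζnn t _ _ _) ((hπ1 t).1 _ _ _)) (Real.exp_nonneg _))
          ⟨w0.2, Finset.mem_univ _, ?_⟩
        exact mul_pos (mul_pos h0 hw0') (Real.exp_pos _)
      have hQ : ∀ a2 z2, Qbar2 M π1 π2 lam t y2 z2m a2 z2
          = (1/lam) * Real.log (Fkey M π1 π2 lam t y2 z2m (a2, z2) / marg2 M π1 π2 t y2 z2m) := by
        intro a2 z2
        have hinner :
            (∑ s : S, ∑ y1 : Y1, ∑ z1m : Z1, ∑ a1 : A1, ∑ z1 : Z1,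
              (zetaM M π1 π2 t s (y1, y2) (z1m, z2m) / marg2 M π1 π2 t y2 z2m) *
              π1 t y1 z1m (a1, z1) *
              Real.exp (lam * Qfun M π1 π2 lam t s (y1, y2) (z1m, z2m) (a1, a2) (z1, z2)))
            = Fkey M π1 π2 lam t y2 z2m (a2, z2) / marg2 M π1 π2 t y2 z2m := by
          simp only [Fkey, Finset.sum_div]
          refine Finset.sum_congr rfl fun _ _ => Finset.sum_congr rfl fun _ _ =>
            Finset.sum_congr rfl fun _ _ => Finset.sum_congr rfl fun _ _ =>
            Finset.sum_congr rfl fun _ _ => ?_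
          ring
        rw [Qbar2, hinner]
      have hle : ∀ x : A2 × Z2,
          Fkey M π1 π2 lam t y2 z2m x ≤ Fkey M π1 π2 lam t y2 z2m (g y2 z2m) := by
        intro x
        have h := hg y2 z2m hm x.1 x.2
        rw [hQ x.1 x.2, hQ (g y2 z2m).1 (g y2 z2m).2] at h
        simp only [Prod.mk.eta] at h
        have hlog := (mul_le_mul_iff_right₀ (show (0:ℝ) < 1/lam by positivity)).mp h
        have hx : 0 < Fkey M π1 π2 lam t y2 z2m x / marg2 M π1 π2 t y2 z2m :=
          div_pos (hFpos x) hm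
        have hy : 0 < Fkey M π1 π2 lam t y2 z2m (g y2 z2m) / marg2 M π1 π2 t y2 z2m :=
          div_pos (hFpos _) hm
        have hee := Real.exp_le_exp.mpr hlog
        rw [Real.exp_log hx, Real.exp_log hy] at hee
        have hfin := mul_le_mul_of_nonneg_right hee hmnn
        rwa [div_mul_cancel₀ _ (ne_of_gt hm), div_mul_cancel₀ _ (ne_of_gt hm)] at hfin
      calc (∑ x : A2 × Z2, π2 t y2 z2m x * Fkey M π1 π2 lam t y2 z2m x)
          ≤ ∑ x : A2 × Z2, π2 t y2 z2m x * Fkey M π1 π2 lam t y2 z2m (g y2 z2m) :=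
            Finset.sum_le_sum fun x _ =>
              mul_le_mul_of_nonneg_left (hle x) ((hπ2 t).1 _ _ x)
        _ = Fkey M π1 π2 lam t y2 z2m (g y2 z2m) := by
            rw [← Finset.sum_mul, (hπ2 t).2, one_mul]
  -- regroup the two sides
  have hL : (∑ s : S, ∑ y : Y1 × Y2, ∑ zm : Z1 × Z2, ∑ a : A1 × A2, ∑ z : Z1 × Z2,
        zetaM M π1 π2 t s y zm *
        (π1 t y.1 zm.1 (a.1, z.1) * π2 t y.2 zm.2 (a.2, z.2)) *
        Real.exp (lam * Qfun M π1 π2 lam t s y zm a z))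
      = ∑ y2 : Y2, ∑ z2m : Z2, ∑ x : A2 × Z2,
          π2 t y2 z2m x * Fkey M π1 π2 lam t y2 z2m x := by
    have h9 := sum_grouped9 (fun (s : S) (y1 : Y1) (y2 : Y2) (z1m : Z1) (z2m : Z2)
        (a1 : A1) (a2 : A2) (z1 : Z1) (z2 : Z2) =>
      zetaM M π1 π2 t s (y1, y2) (z1m, z2m) *
      (π1 t y1 z1m (a1, z1) * π2 t y2 z2m (a2, z2)) *
      Real.exp (lam * Qfun M π1 π2 lam t s (y1, y2) (z1m, z2m) (a1, a2) (z1, z2)))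
    simp only [Prod.mk.eta] at h9
    rw [h9]
    refine Finset.sum_congr rfl fun y2 _ => Finset.sum_congr rfl fun z2m _ =>
      Finset.sum_congr rfl fun x _ => ?_
    simp only [Fkey, Finset.mul_sum]
    refine Finset.sum_congr rfl fun _ _ => Finset.sum_congr rfl fun _ _ =>
      Finset.sum_congr rfl fun _ _ => Finset.sum_congr rfl fun _ _ =>
      Finset.sum_congr rfl fun _ _ => ?_
    ring
  have hR : (∑ s : S, ∑ y : Y1 × Y2, ∑ zm : Z1 × Z2, ∑ a1 : A1, ∑ z1 : Z1,
        zetaM M π1 π2 t s y zm * π1 t y.1 zm.1 (a1, z1) *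
        Real.exp (lam * Qfun M π1 π2 lam t s y zm
          (a1, (g y.2 zm.2).1) (z1, (g y.2 zm.2).2)))
      = ∑ y2 : Y2, ∑ z2m : Z2, Fkey M π1 π2 lam t y2 z2m (g y2 z2m) := by
    have h7 := sum_grouped7 (fun (s : S) (y1 : Y1) (y2 : Y2) (z1m : Z1) (z2m : Z2)
        (a1 : A1) (z1 : Z1) =>
      zetaM M π1 π2 t s (y1, y2) (z1m, z2m) * π1 t y1 z1m (a1, z1) *
      Real.exp (lam * Qfun M π1 π2 lam t s (y1, y2) (z1m, z2m)
        (a1, (g y2 z2m).1) (z1, (g y2 z2m).2)))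
    simp only [Prod.mk.eta] at h7
    rw [h7]
    rfl
  rw [hL, hR]
  exact Finset.sum_le_sum fun y2 _ => Finset.sum_le_sum fun z2m _ => key y2 z2m
end
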